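/- There is a constant C(ρ) ≥ 1 depending only on ρ > 1 such that for all t ∈ (0,2] and all natural numbers m with 1 ≤ m ≤ t^(-1/(ρ-1)) + 1, one has t^m · (m!)^(ρ-1) ≤ C(ρ) · m^((ρ-1)/2) · e^(-(ρ-1)m). -/

import Mathlib

open Real Nat

lemma fact_le_stirling (m : ℕ) (hm : 1 ≤ m) :
    (m ! : ℝ) ≤ Real.exp 1 * Real.sqrt m * ((m : ℝ) / Real.exp 1) ^ m := by
  have hpos : 0 < Stirling.stirlingSeq m := by
    obtain ⟨k, rfl⟩ := Nat.exists_eq_add_of_le hm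
    simpa [Nat.add_comm] using Stirling.stirlingSeq'_pos k
  have h1 : Stirling.stirlingSeq m ≤ Stirling.stirlingSeq 1 := by
    have h := Stirling.log_stirlingSeq'_antitone (Nat.zero_le (m - 1))
    simp only [Function.comp] at h
    rw [Nat.succ_eq_add_one, Nat.sub_add_cancel hm] at h
    exact (Real.log_le_log_iff hpos (by simpa using Stirling.stirlingSeq'_pos 0)).mp h
  rw [Stirling.stirlingSeq_one, Stirling.stirlingSeq] at h1
  have hm0 : (0:ℝ) < (m:ℝ) := by exact_mod_cast hm
  have hden : (0:ℝ) < Real.sqrt (2 * m) * ((m : ℝ) / Real.exp 1) ^ m := by positivity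
  rw [div_le_div_iff₀ hden (by positivity)] at h1
  have h2 : (m ! : ℝ) * Real.sqrt 2 ≤
      (Real.exp 1 * Real.sqrt m * ((m : ℝ) / Real.exp 1) ^ m) * Real.sqrt 2 := by
    rw [Real.sqrt_mul (by norm_num : (0:ℝ) ≤ 2)] at h1
    nlinarith [h1]
  exact le_of_mul_le_mul_right h2 (by positivity)

theorem stmt0 (ρ : ℝ) (hρ : 1 < ρ) :
    ∃ C : ℝ, 1 ≤ C ∧ ∀ (t : ℝ) (m : ℕ), 0 < t → t ≤ 2 → 1 ≤ m →
      (m : ℝ) ≤ t ^ (-(1 / (ρ - 1))) + 1 →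
      t ^ m * (m ! : ℝ) ^ (ρ - 1) ≤ C * (m : ℝ) ^ ((ρ - 1) / 2) * Real.exp (-(ρ - 1) * m) := by
  set ε := ρ - 1 with hεdef
  have hε : (0:ℝ) < ε := by simp [hεdef]; linarith
  refine ⟨2 * Real.exp (3 * ε), ?_, ?_⟩
  · nlinarith [Real.one_le_exp (by positivity : (0:ℝ) ≤ 3 * ε)]
  intro t m ht ht2 hm hmle
  rcases eq_or_lt_of_le hm with h1 | h2
  · -- m = 1
    have hm1 : m = 1 := h1.symm
    subst hm1
    have hrw : Real.exp (-ε * (1:ℕ)) = Real.exp (-ε) := by norm_num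
    have h3 : (1:ℝ) ≤ Real.exp (3 * ε) * ((1:ℕ):ℝ) ^ (ε / 2) * Real.exp (-ε) := by
      rw [Nat.cast_one, Real.one_rpow, mul_one, ← Real.exp_add]
      exact Real.one_le_exp (by linarith)
    have hLHS : t ^ 1 * ((1:ℕ)! : ℝ) ^ ε = t := by
      simp
    rw [hLHS]
    calc t ≤ 2 := ht2
      _ = 2 * 1 := by ring
      _ ≤ 2 * (Real.exp (3 * ε) * ((1:ℕ):ℝ) ^ (ε / 2) * Real.exp (-ε)) := by
          nlinarith [h3]
      _ = 2 * Real.exp (3 * ε) * ((1:ℕ):ℝ) ^ (ε / 2) * Real.exp (-ε * ((1:ℕ):ℝ)) := by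
          rw [show (-ε * (((1:ℕ)):ℝ)) = -ε by norm_num]; ring
  · -- m ≥ 2
    have hm2 : 2 ≤ m := h2
    have hm2' : (2:ℝ) ≤ (m:ℝ) := by exact_mod_cast hm2
    have hmpos : (0:ℝ) < (m:ℝ) := by linarith
    have hm1pos : (0:ℝ) < (m:ℝ) - 1 := by linarith
    -- t ≤ (m-1)^(-ε)
    have key2 : t ≤ ((m:ℝ) - 1) ^ (-ε) := by
      have hle : (m:ℝ) - 1 ≤ t ^ (-(1/ε)) := by linarith
      have := Real.rpow_le_rpow_of_nonpos hm1pos hle (neg_nonpos.mpr hε.le)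
      calc t = (t ^ (-(1/ε))) ^ (-ε) := by
              rw [← Real.rpow_mul ht.le]
              rw [show (-(1/ε)) * (-ε) = 1 by field_simp]
              exact (Real.rpow_one t).symm
        _ ≤ ((m:ℝ) - 1) ^ (-ε) := this
    -- t^m ≤ ((m-1)^(-m:ℝ))^ε
    have key3 : t ^ m ≤ (((m:ℝ) - 1) ^ (-(m:ℝ))) ^ ε := by
      calc t ^ m ≤ (((m:ℝ) - 1) ^ (-ε)) ^ m :=
            pow_le_pow_left₀ ht.le key2 m
        _ = ((m:ℝ) - 1) ^ (-ε * m) := by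
            rw [← Real.rpow_natCast (((m:ℝ) - 1) ^ (-ε)) m, ← Real.rpow_mul hm1pos.le]
        _ = (((m:ℝ) - 1) ^ (-(m:ℝ))) ^ ε := by
            rw [← Real.rpow_mul hm1pos.le]; ring_nf
    -- factorial bound
    have key1 := fact_le_stirling m hm
    -- core bound
    have hcore : ((m:ℝ) - 1) ^ (-(m:ℝ)) * (Real.exp 1 * Real.sqrt m * ((m : ℝ) / Real.exp 1) ^ m)
        ≤ Real.exp 3 * Real.sqrt m * Real.exp (-(m:ℝ)) := by
      have hratio : ((m:ℝ) / ((m:ℝ) - 1)) ^ m ≤ Real.exp 2 := by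
        have h1 : (m:ℝ) / ((m:ℝ) - 1) ≤ Real.exp (1 / ((m:ℝ) - 1)) := by
          have := Real.add_one_le_exp (1 / ((m:ℝ) - 1))
          have heq : (m:ℝ) / ((m:ℝ) - 1) = 1 / ((m:ℝ) - 1) + 1 := by field_simp; ring
          linarith [heq ▸ this]
        calc ((m:ℝ) / ((m:ℝ) - 1)) ^ m ≤ (Real.exp (1 / ((m:ℝ) - 1))) ^ m :=
              pow_le_pow_left₀ (by positivity) h1 m
          _ = Real.exp ((m:ℝ) / ((m:ℝ) - 1)) := by
              rw [← Real.exp_nat_mul]; ring_nf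
          _ ≤ Real.exp 2 := by
              apply Real.exp_le_exp.mpr
              rw [div_le_iff₀ hm1pos]; linarith
      have hrw : ((m:ℝ) - 1) ^ (-(m:ℝ)) * (Real.exp 1 * Real.sqrt m * ((m : ℝ) / Real.exp 1) ^ m)
          = Real.exp 1 * Real.sqrt m * (Real.exp (-(m:ℝ)) * ((m:ℝ) / ((m:ℝ) - 1)) ^ m) := by
        rw [Real.rpow_neg hm1pos.le, Real.rpow_natCast, Real.exp_neg,
          ← Real.exp_one_pow m, div_pow, div_pow]
        have he : (0:ℝ) < Real.exp 1 := Real.exp_pos 1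
        field_simp
      rw [hrw]
      have : Real.exp 1 * Real.sqrt m * (Real.exp (-(m:ℝ)) * ((m:ℝ) / ((m:ℝ) - 1)) ^ m)
          ≤ Real.exp 1 * Real.sqrt m * (Real.exp (-(m:ℝ)) * Real.exp 2) := by
        apply mul_le_mul_of_nonneg_left _ (by positivity)
        exact mul_le_mul_of_nonneg_left hratio (by positivity)
      calc _ ≤ Real.exp 1 * Real.sqrt m * (Real.exp (-(m:ℝ)) * Real.exp 2) := this
        _ = Real.exp 3 * Real.sqrt m * Real.exp (-(m:ℝ)) := by
            have h3 : Real.exp 3 * Real.exp (-(m:ℝ)) = Real.exp 1 * (Real.exp (-(m:ℝ)) * Real.exp 2) := by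
              rw [← Real.exp_add, ← Real.exp_add, ← Real.exp_add]; ring_nf
            linear_combination (-Real.sqrt (m:ℝ)) * h3
    -- assemble
    have hA : t ^ m * (m ! : ℝ) ^ ε ≤
        (((m:ℝ) - 1) ^ (-(m:ℝ)) * (Real.exp 1 * Real.sqrt m * ((m : ℝ) / Real.exp 1) ^ m)) ^ ε := by
      rw [Real.mul_rpow (by positivity) (by positivity)]
      apply mul_le_mul key3 (Real.rpow_le_rpow (by positivity) key1 hε.le)
        (by positivity) (by positivity)
    have hB : (((m:ℝ) - 1) ^ (-(m:ℝ)) * (Real.exp 1 * Real.sqrt m * ((m : ℝ) / Real.exp 1) ^ m)) ^ ε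
        ≤ (Real.exp 3 * Real.sqrt m * Real.exp (-(m:ℝ))) ^ ε :=
      Real.rpow_le_rpow (by positivity) hcore hε.le
    have hC : (Real.exp 3 * Real.sqrt m * Real.exp (-(m:ℝ))) ^ ε
        = Real.exp (3 * ε) * (m:ℝ) ^ (ε / 2) * Real.exp (-ε * m) := by
      rw [Real.mul_rpow (by positivity) (by positivity),
          Real.mul_rpow (by positivity) (by positivity),
          ← Real.exp_mul, ← Real.exp_mul, Real.sqrt_eq_rpow, ← Real.rpow_mul hmpos.le]
      ring_nf
    calc t ^ m * (m ! : ℝ) ^ ε ≤ _ := hA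
      _ ≤ _ := hB
      _ = Real.exp (3 * ε) * (m:ℝ) ^ (ε / 2) * Real.exp (-ε * m) := hC
      _ ≤ 2 * Real.exp (3 * ε) * (m:ℝ) ^ (ε / 2) * Real.exp (-ε * m) := by
          have : (0:ℝ) ≤ Real.exp (3 * ε) * (m:ℝ) ^ (ε / 2) * Real.exp (-ε * m) := by positivity
          linarith
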